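/- Define, for integers M ≥ 1, the real number k_{2M−1} = 2·binom(2M, M)·binom(2M−2, M−1) / catalan(2M−1) − 2, where catalan(n) = (1/(n+1))·binom(2n, n). Then the sequence k_{2M−1}/√(2M−1) converges to 4/√π as M → ∞. -/

import Mathlib

open Filter Real

lemma cb_stirling (n : ℕ) (hn : 1 ≤ n) :
    (Nat.centralBinom n : ℝ) * Real.sqrt n / 4 ^ n
      = Stirling.stirlingSeq (2 * n) / (Stirling.stirlingSeq n) ^ 2 := by
  have hn0 : (0:ℝ) < n := by exact_mod_cast hn
  have hs : (0:ℝ) < Real.sqrt n := Real.sqrt_pos.mpr hn0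
  have hfact : ((2*n).factorial : ℝ) = (Nat.centralBinom n : ℝ) * (n.factorial : ℝ)^2 := by
    have := Nat.choose_mul_factorial_mul_factorial (show n ≤ 2*n by omega)
    rw [Nat.centralBinom]
    push_cast [← this]
    have h : 2*n - n = n := by omega
    rw [h]; ring
  rw [Stirling.stirlingSeq, Stirling.stirlingSeq]
  have h1 : ((n.factorial:ℝ) / (Real.sqrt (2*(n:ℝ)) * ((n:ℝ)/Real.exp 1)^n))^2
      = (n.factorial:ℝ)^2 / (2*(n:ℝ)*((n:ℝ)/Real.exp 1)^(2*n)) := by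
    rw [div_pow, mul_pow, Real.sq_sqrt (by positivity), ← pow_mul, mul_comm n 2]
  have h2 : Real.sqrt (2*((2*n : ℕ):ℝ)) = 2 * Real.sqrt n := by
    push_cast
    rw [show (2:ℝ)*(2*(n:ℝ)) = 4 * n by ring, Real.sqrt_mul (by norm_num),
      show Real.sqrt 4 = 2 by rw [show (4:ℝ) = 2^2 by norm_num, Real.sqrt_sq]; norm_num]
  have h3 : (((2*n : ℕ):ℝ)/Real.exp 1)^(2*n) = 4^n * ((n:ℝ)/Real.exp 1)^(2*n) := by
    push_cast
    rw [show (2*(n:ℝ))/Real.exp 1 = 2 * ((n:ℝ)/Real.exp 1) by ring, mul_pow,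
      show (2:ℝ)^(2*n) = 4^n by rw [pow_mul]; norm_num]
  rw [h1, h2, h3, hfact]
  have hf : ((n.factorial : ℝ)) ≠ 0 := by positivity
  have ht : ((n:ℝ)/Real.exp 1) ≠ 0 := by positivity
  have hsq : Real.sqrt n * Real.sqrt n = (n:ℝ) := Real.mul_self_sqrt hn0.le
  field_simp
  ring_nf
  rw [Real.sq_sqrt hn0.le]

lemma cb_tendsto :
    Tendsto (fun n : ℕ => (Nat.centralBinom n : ℝ) * Real.sqrt n / 4 ^ n) atTop
      (nhds (1 / Real.sqrt π)) := by
  have hπ : Real.sqrt π ≠ 0 := by positivity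
  have h2 : Tendsto (fun n : ℕ => Stirling.stirlingSeq (2 * n)) atTop (nhds (Real.sqrt π)) :=
    Stirling.tendsto_stirlingSeq_sqrt_pi.comp (tendsto_id.const_mul_atTop' two_pos)
  have h1 : Tendsto (fun n : ℕ => (Stirling.stirlingSeq n) ^ 2) atTop
      (nhds ((Real.sqrt π) ^ 2)) := Stirling.tendsto_stirlingSeq_sqrt_pi.pow 2
  have := h2.div h1 (by positivity)
  have heq : Real.sqrt π / (Real.sqrt π) ^ 2 = 1 / Real.sqrt π := by
    field_simp
  rw [heq] at this
  refine this.congr' ?_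
  filter_upwards [eventually_ge_atTop 1] with n hn
  exact (cb_stirling n hn).symm

lemma sqrt_tendsto_atTop' : Tendsto Real.sqrt atTop atTop := by
  have : Real.sqrt = fun x : ℝ => x ^ (1/2 : ℝ) := funext fun x => Real.sqrt_eq_rpow x
  rw [this]
  exact tendsto_rpow_atTop (by norm_num)

/-- With `k_{2M−1} = 2·binom(2M, M)·binom(2M−2, M−1) / catalan(2M−1) − 2` (where
`catalan(n) = (1/(n+1))·binom(2n, n)`), the sequence `k_{2M−1}/√(2M−1)` converges to `4/√π`. -/
theorem contact_asymptotics_odd (k : ℕ → ℝ)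
    (hk : ∀ M : ℕ, 1 ≤ M →
      k M = 2 * (Nat.choose (2 * M) M : ℝ) * (Nat.choose (2 * M - 2) (M - 1) : ℝ) /
          ((1 / (((2 * M - 1 : ℕ) : ℝ) + 1)) *
            (Nat.choose (2 * (2 * M - 1)) (2 * M - 1) : ℝ)) - 2) :
    Tendsto (fun M : ℕ => k M / Real.sqrt (2 * (M : ℝ) - 1)) atTop
      (nhds (4 / Real.sqrt Real.pi)) := by
  set b : ℕ → ℝ := fun n => (Nat.centralBinom n : ℝ) * Real.sqrt n / 4 ^ n with hb
  have hπ : Real.sqrt π ≠ 0 := by positivity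
  -- limits of components
  have L1 : Tendsto b atTop (nhds (1 / Real.sqrt π)) := cb_tendsto
  have L2 : Tendsto (fun M : ℕ => b (M - 1)) atTop (nhds (1 / Real.sqrt π)) :=
    L1.comp (tendsto_sub_atTop_nat 1)
  have hlin : Tendsto (fun M : ℕ => 2 * M - 1) atTop atTop :=
    (tendsto_sub_atTop_nat 1).comp (tendsto_id.const_mul_atTop' two_pos)
  have L3 : Tendsto (fun M : ℕ => b (2 * M - 1)) atTop (nhds (1 / Real.sqrt π)) :=
    L1.comp hlin
  -- ratio M / sqrt (M * (M-1)) → 1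
  have hM1 : Tendsto (fun M : ℕ => ((M : ℝ) - 1)) atTop atTop := by
    have := tendsto_atTop_add_const_right atTop (-1 : ℝ) tendsto_natCast_atTop_atTop
    exact this.congr fun M => by ring
  have hA : Tendsto (fun M : ℕ => (M : ℝ) / ((M : ℝ) - 1)) atTop (nhds 1) := by
    have h0 : Tendsto (fun M : ℕ => ((M : ℝ) - 1)⁻¹) atTop (nhds 0) :=
      hM1.inv_tendsto_atTop
    have := tendsto_const_nhds.add h0 (f := fun _ : ℕ => (1 : ℝ))
    rw [add_zero] at this
    refine this.congr' ?_
    filter_upwards [eventually_ge_atTop 2] with M hM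
    have hm : ((M : ℝ) - 1) ≠ 0 := by
      have : (2 : ℝ) ≤ M := by exact_mod_cast hM
      nlinarith
    field_simp
    ring
  have L4 : Tendsto (fun M : ℕ => (M : ℝ) / Real.sqrt ((M : ℝ) * ((M : ℝ) - 1))) atTop
      (nhds 1) := by
    have hcont : Tendsto (fun M : ℕ => Real.sqrt ((M : ℝ) / ((M : ℝ) - 1))) atTop
        (nhds 1) := by
      have := (Real.continuous_sqrt.tendsto 1).comp hA
      rw [Real.sqrt_one] at this
      exact this
    refine hcont.congr' ?_
    filter_upwards [eventually_ge_atTop 2] with M hM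
    have h2 : (2 : ℝ) ≤ M := by exact_mod_cast hM
    have hm0 : (0 : ℝ) < (M : ℝ) := by linarith
    have hm1 : (0 : ℝ) < (M : ℝ) - 1 := by linarith
    rw [Real.sqrt_div hm0.le, Real.sqrt_mul hm0.le,
      div_eq_div_iff (by positivity) (by positivity),
      show Real.sqrt (M:ℝ) * (Real.sqrt (M:ℝ) * Real.sqrt ((M:ℝ)-1))
          = (Real.sqrt (M:ℝ) * Real.sqrt (M:ℝ)) * Real.sqrt ((M:ℝ)-1) from by ring,
      Real.mul_self_sqrt hm0.le]
  -- 2 / sqrt(2M-1) → 0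
  have L5 : Tendsto (fun M : ℕ => 2 / Real.sqrt (2 * (M : ℝ) - 1)) atTop (nhds 0) := by
    have h1 : Tendsto (fun M : ℕ => 2 * (M : ℝ) - 1) atTop atTop := by
      have := tendsto_atTop_add_const_right atTop (-1 : ℝ)
        ((tendsto_natCast_atTop_atTop (R := ℝ)).const_mul_atTop two_pos)
      exact this.congr fun M => by ring
    have h2 := (sqrt_tendsto_atTop'.comp h1).inv_tendsto_atTop
    have h3 := h2.const_mul (2 : ℝ)
    rw [mul_zero] at h3
    exact h3.congr fun M => by rw [div_eq_mul_inv]; rfl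
  have h0 : (1 : ℝ) / Real.sqrt π ≠ 0 := by positivity
  have Lg : Tendsto (fun M : ℕ =>
      4 * b M * b (M - 1) / b (2 * M - 1) * ((M : ℝ) / Real.sqrt ((M : ℝ) * ((M : ℝ) - 1)))
        - 2 / Real.sqrt (2 * (M : ℝ) - 1)) atTop (nhds (4 / Real.sqrt π)) := by
    have hval : 4 * (1 / Real.sqrt π) * (1 / Real.sqrt π) / (1 / Real.sqrt π) * 1 - 0
        = 4 / Real.sqrt π := by
      field_simp
      ring
    rw [← hval]
    exact ((((tendsto_const_nhds (x := (4:ℝ))).mul L1).mul L2).div L3 h0).mul L4 |>.sub L5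
  refine Lg.congr' ?_
  filter_upwards [eventually_ge_atTop 2] with M hM
  have hMone : 1 ≤ M := by omega
  rw [hk M hMone]
  have h2 : (2 : ℝ) ≤ M := by exact_mod_cast hM
  have hm0 : (0 : ℝ) < M := by linarith
  have hm1 : (0 : ℝ) < (M : ℝ) - 1 := by linarith
  have hw0 : (0 : ℝ) < 2 * (M : ℝ) - 1 := by linarith
  have e1 : ((2 * M).choose M : ℝ) = (Nat.centralBinom M : ℝ) := by rw [Nat.centralBinom]
  have e2 : ((2 * M - 2).choose (M - 1) : ℝ) = (Nat.centralBinom (M - 1) : ℝ) := by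
    rw [Nat.centralBinom, show 2 * (M - 1) = 2 * M - 2 from by omega]
  have e3 : ((2 * (2 * M - 1)).choose (2 * M - 1) : ℝ) = (Nat.centralBinom (2 * M - 1) : ℝ) := by
    rw [Nat.centralBinom]
  have c1 : ((M - 1 : ℕ) : ℝ) = (M : ℝ) - 1 := by
    rw [Nat.cast_sub hMone, Nat.cast_one]
  have c2 : ((2 * M - 1 : ℕ) : ℝ) = 2 * (M : ℝ) - 1 := by
    rw [Nat.cast_sub (by omega)]; push_cast; ring
  simp only [hb]
  rw [e1, e2, e3, c1, c2]
  have hp : (4 : ℝ) ^ (2 * M - 1) = 4 ^ M * 4 ^ (M - 1) := by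
    rw [← pow_add]; congr 1; omega
  have hsm : Real.sqrt ((M : ℝ) * ((M : ℝ) - 1)) = Real.sqrt M * Real.sqrt ((M : ℝ) - 1) :=
    Real.sqrt_mul hm0.le _
  have hc3 : (Nat.centralBinom (2 * M - 1) : ℝ) ≠ 0 := by
    exact_mod_cast (Nat.centralBinom_pos _).ne'
  have hsa : (0:ℝ) < Real.sqrt M := Real.sqrt_pos.mpr hm0
  have hsb : (0:ℝ) < Real.sqrt ((M:ℝ) - 1) := Real.sqrt_pos.mpr hm1
  have hsw : (0:ℝ) < Real.sqrt (2 * (M:ℝ) - 1) := Real.sqrt_pos.mpr hw0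
  rw [hp, hsm, show (2 * (M:ℝ) - 1) + 1 = 2 * M by ring]
  field_simp
  ring_nf
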